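/- Let G be an n-vertex totally ordered graph, S a set of s vertices of G with s ≤ n − 2, G' = G − S (inheriting the orders), A the array obtained from the height table of G by deleting the columns indexed by S, A' the height table of G', and let {A_β : β ∈ Z} be a family of arrays indexed by Z = {1,2,3,…} × V(G') (ordered lexicographically by row then vertex) satisfying properties (1)–(3): (1) if δ < β then A_β(δ) = A'(δ); (2) if δ ≥ β and A_β(δ) is not a hole then A_β(δ) = A(δ); (3) if γ is the successor of β in Z, then A_γ is obtained from A_β by swapping A_β(β) with A_β(δ) for some δ in the critical interval of A_β, and if β and δ lie in distinct columns u and v then A_β(δ) = uv. If e is an edge of G', β ∈ Z is the cell with A'(β) = e, and [(i,u),(j,u)] is the critical interval of A_β, then drop(G,S,e) ≤ j − i. -/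

import Mathlib

open scoped Classical

namespace AltitudePaper

variable {V : Type*} [Fintype V]

/-- The list of cells `(i, u)` (row `i`, column `u`), rows `1..N`, in the order
they are filled: by row, then by the vertex (column) order. -/
noncomputable def cellList (ov : LinearOrder V) (N : ℕ) : List (ℕ × V) :=
  letI := ov
  (List.range N).flatMap fun i => ((Finset.univ : Finset V).sort (· ≤ ·)).map fun u => (i + 1, u)

/-- The largest (in the edge order `oe`) edge of `G` incident to `u` not among `used`. -/
noncomputable def pick (G : SimpleGraph V) (oe : LinearOrder (Sym2 V)) (u : V)
    (used : Finset (Sym2 V)) : Option (Sym2 V) :=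
  letI := oe
  ((Finset.univ : Finset (Sym2 V)).filter fun e => e ∈ G.edgeSet ∧ u ∈ e ∧ e ∉ used).max

/-- Fill the given list of cells in order, greedily placing at each cell `(i,u)` the
largest unused edge incident to `u`. -/
noncomputable def tableAux (G : SimpleGraph V) (oe : LinearOrder (Sym2 V)) :
    List (ℕ × V) → Finset (Sym2 V) → (ℕ × V) → Option (Sym2 V)
  | [], _, _ => none
  | c :: rest, used, β =>
    match pick G oe c.2 used with
    | none => if β = c then none else tableAux G oe rest used β
    | some e => if β = c then some e else tableAux G oe rest (insert e used) β

/-- The height table of the totally ordered graph `(G, ov, oe)`:  cells `(i,u)` with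
`i` a positive integer (row) and `u` a vertex (column) are filled in order (by row,
then by column order), each cell receiving the largest edge incident to its column
not appearing in an earlier cell (and left empty if there is none). -/
noncomputable def heightTable (G : SimpleGraph V) (ov : LinearOrder V)
    (oe : LinearOrder (Sym2 V)) : ℕ × V → Option (Sym2 V) :=
  tableAux G oe (cellList ov (Fintype.card (Sym2 V))) ∅

/-- The height `h_G(e)` of an edge `e`: the index of the row of the height table
containing `e`. -/
noncomputable def edgeHeight (G : SimpleGraph V) (ov : LinearOrder V)
    (oe : LinearOrder (Sym2 V)) (e : Sym2 V) : ℕ :=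
  sSup {i | ∃ u, heightTable G ov oe (i, u) = some e}

/-- A monotone path in the edge-ordered graph `(G, oe)`: a path traversing its
edges in increasing order of the edge ordering. -/
def IsMonotonePath (G : SimpleGraph V) (oe : LinearOrder (Sym2 V)) {u v : V}
    (p : G.Walk u v) : Prop :=
  p.IsPath ∧ List.Chain' (fun e f => oe.lt e f) p.edges

/-- The height of a (nontrivial) monotone path: the height of its last edge. -/
noncomputable def pathHeight (G : SimpleGraph V) (ov : LinearOrder V)
    (oe : LinearOrder (Sym2 V)) {u v : V} (p : G.Walk u v) : ℕ :=
  (p.edges.getLast?.map (edgeHeight G ov oe)).getD 0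


/-- The graph `G − S`: delete the vertices of `S` (and all incident edges).  It is
realized on the same vertex type, with the vertices of `S` made isolated; its height
table therefore agrees, on columns outside `S`, with the height table of the induced
graph on `V ∖ S` with the inherited vertex and edge orders. -/
def delVerts (G : SimpleGraph V) (S : Set V) : SimpleGraph V where
  Adj a b := G.Adj a b ∧ a ∉ S ∧ b ∉ S
  symm := ⟨by intro a b h; exact ⟨h.1.symm, h.2.2, h.2.1⟩⟩
  loopless := ⟨by intro a h; exact G.loopless.irrefl a h.1⟩

/-- The contents of a cell of one of the arrays `A_β`: empty, an edge, or a hole. -/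
inductive Cell (V : Type*) where
  | empty : Cell V
  | edge : Sym2 V → Cell V
  | hole : Cell V

/-- View a height-table entry as a cell (no holes). -/
def ofOpt : Option (Sym2 V) → Cell V
  | none => Cell.empty
  | some e => Cell.edge e

/-- The strict order on the index set `Z = {1,2,…} × V(G′)` of cells:
`(i,u) < (i',v)` iff `i < i'`, or `i = i'` and `u` precedes `v` in the vertex
order. -/
def zLT (ov : LinearOrder V) {S : Set V} (a b : ℕ × {u : V // u ∉ S}) : Prop :=
  a.1 < b.1 ∨ (a.1 = b.1 ∧ ov.lt a.2.val b.2.val)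

/-- The (non-strict) order on `Z`. -/
def zLE (ov : LinearOrder V) {S : Set V} (a b : ℕ × {u : V // u ∉ S}) : Prop :=
  zLT ov a b ∨ a = b

/-- `γ` is the successor of `β` in `Z`. -/
def IsSuccZ (ov : LinearOrder V) {S : Set V} (β γ : ℕ × {u : V // u ∉ S}) : Prop :=
  zLT ov β γ ∧ ∀ δ, zLT ov β δ → zLE ov γ δ

/-- `j` is the row index of the top of the critical interval `[(i,u),(j,u)]` of the
array `Af β` at `β = (i,u)`: the least `j ≥ i` such that the cell `(j, u)` does not
contain a hole. -/
def IsCritBound {S : Set V} (Af : (ℕ × {u : V // u ∉ S}) → (ℕ × {u : V // u ∉ S}) → Cell V)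
    (β : ℕ × {u : V // u ∉ S}) (j : ℕ) : Prop :=
  β.1 ≤ j ∧ Af β (j, β.2) ≠ Cell.hole ∧
    ∀ j', β.1 ≤ j' → j' < j → Af β (j', β.2) = Cell.hole

/-- `drop(G, S, e) = h_G(e) − h_{G−S}(e)`. -/
noncomputable def dropHeight (G : SimpleGraph V) (ov : LinearOrder V)
    (oe : LinearOrder (Sym2 V)) (S : Set V) (e : Sym2 V) : ℤ :=
  (edgeHeight G ov oe e : ℤ) - (edgeHeight (delVerts G S) ov oe e : ℤ)

lemma pick_not_mem {G : SimpleGraph V} {oe : LinearOrder (Sym2 V)} {u : V}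
    {used : Finset (Sym2 V)} {e : Sym2 V} (h : pick G oe u used = some e) : e ∉ used := by
  letI := oe
  have hm := Finset.mem_of_max h
  simp only [Finset.mem_filter] at hm
  exact hm.2.2.2

lemma tableAux_some_not_mem {G : SimpleGraph V} {oe : LinearOrder (Sym2 V)} :
    ∀ (l : List (ℕ × V)) (used : Finset (Sym2 V)) (β : ℕ × V) (e : Sym2 V),
      tableAux G oe l used β = some e → e ∉ used
  | [], used, β, e => by simp [tableAux]
  | c :: rest, used, β, e => by
    intro h
    rcases hp : pick G oe c.2 used with _ | f
    · rw [tableAux, hp] at h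
      by_cases hbc : β = c
      · rw [if_pos hbc] at h; exact absurd h (by simp)
      · rw [if_neg hbc] at h
        exact tableAux_some_not_mem rest used β e h
    · rw [tableAux, hp] at h
      simp only [] at h
      by_cases hbc : β = c
      · rw [if_pos hbc] at h
        cases h; exact pick_not_mem hp
      · rw [if_neg hbc] at h
        have := tableAux_some_not_mem rest (insert f used) β e h
        intro hm; exact this (Finset.mem_insert_of_mem hm)

lemma tableAux_some_unique {G : SimpleGraph V} {oe : LinearOrder (Sym2 V)} :
    ∀ (l : List (ℕ × V)) (used : Finset (Sym2 V)) (β β' : ℕ × V) (e : Sym2 V),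
      tableAux G oe l used β = some e → tableAux G oe l used β' = some e → β = β'
  | [], used, β, β', e => by simp [tableAux]
  | c :: rest, used, β, β', e => by
    intro h h'
    rcases hp : pick G oe c.2 used with _ | f
    · rw [tableAux, hp] at h h'
      by_cases hbc : β = c
      · rw [if_pos hbc] at h; exact absurd h (by simp)
      · rw [if_neg hbc] at h
        by_cases hbc' : β' = c
        · rw [if_pos hbc'] at h'; exact absurd h' (by simp)
        · rw [if_neg hbc'] at h'
          exact tableAux_some_unique rest used β β' e h h'
    · rw [tableAux, hp] at h h'
      simp only [] at h h'
      by_cases hbc : β = c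
      · rw [if_pos hbc] at h
        cases h
        by_cases hbc' : β' = c
        · rw [hbc, hbc']
        · rw [if_neg hbc'] at h'
          exact absurd (Finset.mem_insert_self e used)
            (tableAux_some_not_mem rest (insert e used) β' e h')
      · rw [if_neg hbc] at h
        by_cases hbc' : β' = c
        · rw [if_pos hbc'] at h'
          cases h'
          exact absurd (Finset.mem_insert_self e used)
            (tableAux_some_not_mem rest (insert e used) β e h)
        · rw [if_neg hbc'] at h'
          exact tableAux_some_unique rest (insert f used) β β' e h h'

lemma heightTable_some_unique {G : SimpleGraph V} {ov : LinearOrder V}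
    {oe : LinearOrder (Sym2 V)} {c c' : ℕ × V} {e : Sym2 V}
    (h : heightTable G ov oe c = some e) (h' : heightTable G ov oe c' = some e) : c = c' :=
  tableAux_some_unique _ _ c c' e h h'

lemma edgeHeight_eq {G : SimpleGraph V} {ov : LinearOrder V} {oe : LinearOrder (Sym2 V)}
    {e : Sym2 V} {i : ℕ} {u : V} (h : heightTable G ov oe (i, u) = some e) :
    edgeHeight G ov oe e = i := by
  have hset : {k | ∃ w, heightTable G ov oe (k, w) = some e} = {i} := by
    ext k
    constructor
    · rintro ⟨w, hw⟩
      have := heightTable_some_unique hw h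
      exact (Prod.mk.injEq _ _ _ _ ▸ this).1
    · rintro rfl; exact ⟨u, h⟩
  rw [edgeHeight, hset, csSup_singleton]

lemma critBound_unique {S : Set V}
    {Af : (ℕ × {u : V // u ∉ S}) → (ℕ × {u : V // u ∉ S}) → Cell V}
    {β : ℕ × {u : V // u ∉ S}} {j j' : ℕ}
    (h : IsCritBound Af β j) (h' : IsCritBound Af β j') : j = j' := by
  by_contra hne
  rcases lt_or_gt_of_ne hne with hl | hl
  · exact h.2.1 (h'.2.2 j h.1 hl)
  · exact h'.2.1 (h.2.2 j' h'.1 hl)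

lemma exists_succZ (ov : LinearOrder V) {S : Set V}
    (β : ℕ × {u : V // u ∉ S}) : ∃ γ, IsSuccZ ov β γ := by
  letI := ov
  haveI : Fintype {u : V // u ∉ S} := Fintype.ofFinite _
  have huniv : (Finset.univ : Finset {u : V // u ∉ S}).Nonempty := ⟨β.2, Finset.mem_univ _⟩
  by_cases hmax : ∃ v : {u : V // u ∉ S}, β.2 < v
  · set F : Finset {u : V // u ∉ S} := Finset.univ.filter (fun w => β.2 < w) with hF
    have hFne : F.Nonempty := by
      obtain ⟨v, hv⟩ := hmax
      exact ⟨v, by simp [hF, hv]⟩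
    refine ⟨(β.1, F.min' hFne), Or.inr ⟨rfl, ?_⟩, ?_⟩
    · have hm := F.min'_mem hFne
      exact Subtype.coe_lt_coe.mpr (Finset.mem_filter.mp hm).2
    · intro δ hδ
      rcases hδ with hlt | ⟨heq, hlt⟩
      · exact Or.inl (Or.inl hlt)
      · have hδF : δ.2 ∈ F := by
          rw [hF, Finset.mem_filter]
          exact ⟨Finset.mem_univ _, Subtype.coe_lt_coe.mp hlt⟩
        have hle : F.min' hFne ≤ δ.2 := F.min'_le _ hδF
        rcases lt_or_eq_of_le hle with hlt2 | heq2
        · exact Or.inl (Or.inr ⟨heq, Subtype.coe_lt_coe.mpr hlt2⟩)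
        · exact Or.inr (Prod.ext heq heq2)
  · push_neg at hmax
    refine ⟨(β.1 + 1, Finset.univ.min' huniv), Or.inl (Nat.lt_succ_self _), ?_⟩
    intro δ hδ
    rcases hδ with hlt | ⟨heq, hlt⟩
    · rcases lt_or_eq_of_le (Nat.succ_le_of_lt hlt) with h1 | h1
      · exact Or.inl (Or.inl h1)
      · have hle : Finset.univ.min' huniv ≤ δ.2 := Finset.min'_le _ _ (Finset.mem_univ _)
        rcases lt_or_eq_of_le hle with hlt2 | heq2
        · exact Or.inl (Or.inr ⟨h1, Subtype.coe_lt_coe.mpr hlt2⟩)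
        · exact Or.inr (Prod.ext h1 heq2)
    · exact absurd (Subtype.coe_lt_coe.mp hlt) (not_lt_of_ge (hmax δ.2))

/-- Lemma `drop` of the paper.  Suppose `{A_β : β ∈ Z}` is a family
of arrays as in Lemma `stdtbl` (satisfying properties (1)–(3)), `e` is an edge of
`G′ = G − S`, `β` is the cell of the height table `A′` of `G′` containing `e`, and
`[(i,u),(j,u)]` is the critical interval of `A_β`.  Then `drop(G,S,e) ≤ j − i`. -/
theorem drop_le_critical_interval {V : Type*} [Fintype V] (G : SimpleGraph V)
    (ov : LinearOrder V) (oe : LinearOrder (Sym2 V)) (n : ℕ)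
    (hn : Fintype.card V = n) (S : Set V) (s : ℕ) (hS : S.ncard = s)
    (hsn : s + 2 ≤ n)
    (Af : (ℕ × {u : V // u ∉ S}) → (ℕ × {u : V // u ∉ S}) → Cell V)
    -- every cell is empty, a hole, or contains an edge of G′
    (hedges : ∀ β δ e, Af β δ = Cell.edge e → e ∈ (delVerts G S).edgeSet)
    -- each edge of G′ appears in exactly one cell of each array
    (huniq : ∀ β, ∀ e ∈ (delVerts G S).edgeSet, ∃! δ, Af β δ = Cell.edge e)
    -- property (1)
    (h1 : ∀ β δ, zLT ov δ β → Af β δ =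
      ofOpt (heightTable (delVerts G S) ov oe (δ.1, δ.2.val)))
    -- property (2)
    (h2 : ∀ β δ, zLE ov β δ → Af β δ ≠ Cell.hole →
      Af β δ = ofOpt (heightTable G ov oe (δ.1, δ.2.val)))
    -- property (3)
    (h3 : ∀ β γ, IsSuccZ ov β γ → ∃ j, IsCritBound Af β j ∧
      ∃ δ, zLE ov β δ ∧ zLE ov δ (j, β.2) ∧
        (Af γ β = Af β δ ∧ Af γ δ = Af β β ∧
          ∀ ε, ε ≠ β → ε ≠ δ → Af γ ε = Af β ε) ∧
        (δ.2 ≠ β.2 → Af β δ = Cell.edge s(β.2.val, δ.2.val)))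
    (e : Sym2 V) (he : e ∈ (delVerts G S).edgeSet)
    (β : ℕ × {u : V // u ∉ S})
    (hβ : heightTable (delVerts G S) ov oe (β.1, β.2.val) = some e)
    (j : ℕ) (hj : IsCritBound Af β j) :
    dropHeight G ov oe S e ≤ (j : ℤ) - (β.1 : ℤ) := by
  classical
  have hG' : edgeHeight (delVerts G S) ov oe e = β.1 := edgeHeight_eq hβ
  obtain ⟨γ, hγ⟩ := exists_succZ ov β
  obtain ⟨j', hj', δ, hβδ, hδj, ⟨hswap1, -, -⟩, -⟩ := h3 β γ hγ
  have hjj : j' = j := critBound_unique hj' hj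
  subst hjj
  have hAγβ : Af γ β = Cell.edge e := by
    rw [h1 γ β hγ.1, hβ]; rfl
  have hAβδ : Af β δ = Cell.edge e := hswap1 ▸ hAγβ
  have h2' := h2 β δ hβδ (by rw [hAβδ]; intro hcon; cases hcon)
  rw [hAβδ] at h2'
  have htab : heightTable G ov oe (δ.1, δ.2.val) = some e := by
    rcases hx : heightTable G ov oe (δ.1, δ.2.val) with _ | f
    · rw [hx] at h2'; exact absurd h2' (by intro hcon; cases hcon)
    · rw [hx] at h2'
      have : e = f := Cell.edge.inj h2'
      rw [this]
  have hG : edgeHeight G ov oe e = δ.1 := edgeHeight_eq htab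
  have hδ1 : δ.1 ≤ j' := by
    rcases hδj with hlt | heq
    · rcases hlt with h | ⟨h, -⟩
      · exact le_of_lt h
      · exact le_of_eq h
    · exact le_of_eq (congrArg Prod.fst heq)
  rw [dropHeight, hG, hG']
  have : (δ.1 : ℤ) ≤ (j' : ℤ) := Int.ofNat_le.mpr hδ1
  omega

end AltitudePaper
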